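/- Let (R, m) be a Noetherian local ring, I an ideal of R containing a non-zerodivisor, and x ∈ I a non-zerodivisor such that (x) is a reduction of I (i.e. I^{s+1} = xI^s for some integer s ≥ 0) and such that ~(I^{n+1}) : x = ~(I^n) for all n ≥ 0 (as holds when x is a superficial element of I). Let t ≥ 0 be an integer. Then the following are equivalent: (a) ~(I^{t+1}) = x·~(I^t) + ~(I^{t+2}); (b) I·~(I^t) + ~(I^{t+2}) ⊆ x·~(I^t) + ~(I^{t+2}); (c) ~(I^{n+1}) = x·~(I^n) for every n ≥ t; (d) ~(I^{t+1}) = x·~(I^t). -/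

import Mathlib

/-- The Ratliff-Rush closure of the power `I^n`:  `⋃_{k≥0} (I^{n+k} : I^k)`. -/
noncomputable def rrPow {R : Type*} [CommRing R] (I : Ideal R) (n : ℕ) : Ideal R :=
  ⨆ k : ℕ, (I ^ (n + k)).colon ((I ^ k : Ideal R) : Set R)

namespace RRAux

open Ideal

variable {R : Type*} [CommRing R]

lemma colon_term_mono (I : Ideal R) (n : ℕ) :
    Monotone fun k : ℕ => (I ^ (n + k)).colon ((I ^ k : Ideal R) : Set R) := by
  apply monotone_nat_of_le_succ
  intro k a ha
  rw [Submodule.mem_colon] at ha ⊢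
  intro p hp
  rw [pow_succ] at hp
  refine Submodule.mul_induction_on hp (fun q hq i hi => ?_) (fun y z hy hz => ?_)
  · have : a • (q * i) = (a • q) * i := by simp [smul_eq_mul]; ring
    rw [this, show n + (k + 1) = n + k + 1 from rfl, pow_succ]
    exact Ideal.mul_mem_mul (ha q hq) hi
  · rw [smul_add]; exact Ideal.add_mem _ hy hz

lemma mem_rrPow {I : Ideal R} {n : ℕ} {a : R} :
    a ∈ rrPow I n ↔ ∃ k : ℕ, ∀ p ∈ I ^ k, a * p ∈ I ^ (n + k) := by
  rw [rrPow, Submodule.mem_iSup_of_directed _ (colon_term_mono I n).directed_le]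
  simp [Submodule.mem_colon, smul_eq_mul]

lemma pow_le_rrPow (I : Ideal R) (n : ℕ) : I ^ n ≤ rrPow I n := by
  intro a ha
  rw [mem_rrPow]
  exact ⟨0, fun p hp => by rw [add_zero]; exact Ideal.mul_mem_right p _ ha⟩

lemma rrPow_anti (I : Ideal R) {m n : ℕ} (h : m ≤ n) : rrPow I n ≤ rrPow I m := by
  intro a ha
  rw [mem_rrPow] at ha ⊢
  obtain ⟨k, hk⟩ := ha
  exact ⟨k, fun p hp => Ideal.pow_le_pow_right (by omega) (hk p hp)⟩

lemma mul_rrPow (I : Ideal R) (n : ℕ) : I * rrPow I n ≤ rrPow I (n + 1) := by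
  rw [Ideal.mul_le]
  intro i hi b hb
  rw [mem_rrPow] at hb ⊢
  obtain ⟨k, hk⟩ := hb
  refine ⟨k, fun p hp => ?_⟩
  have : i * b * p = (b * p) * i := by ring
  rw [this, show n + 1 + k = n + k + 1 from by omega, pow_succ]
  exact Ideal.mul_mem_mul (hk p hp) hi

lemma pow_mul_rrPow (I : Ideal R) (m n : ℕ) : I ^ m * rrPow I n ≤ rrPow I (n + m) := by
  induction m with
  | zero => simp [pow_zero, one_mul]
  | succ m ih =>
    rw [pow_succ, mul_comm (I ^ m) I, mul_assoc]
    calc I * (I ^ m * rrPow I n) ≤ I * rrPow I (n + m) := Ideal.mul_mono_right ih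
      _ ≤ rrPow I (n + m + 1) := mul_rrPow I (n + m)

lemma span_mul_rrPow {I : Ideal R} {x : R} (hxI : x ∈ I) (n : ℕ) :
    Ideal.span {x} * rrPow I n ≤ rrPow I (n + 1) :=
  le_trans (Ideal.mul_mono_left ((Ideal.span_singleton_le_iff_mem I).mpr hxI)) (mul_rrPow I n)

lemma colon_pow {I : Ideal R} {x : R}
    (hcolon : ∀ n : ℕ, (rrPow I (n + 1)).colon (Ideal.span {x}) = rrPow I n)
    (k : ℕ) : ∀ n : ℕ, ∀ a : R, x ^ k * a ∈ rrPow I (n + k) → a ∈ rrPow I n := by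
  induction k with
  | zero => intro n a h; simpa using h
  | succ k ih =>
    intro n a h
    have h1 : x ^ k * (x * a) ∈ rrPow I (n + 1 + k) := by
      have e : x ^ k * (x * a) = x ^ (k + 1) * a := by ring
      rw [e, show n + 1 + k = n + (k + 1) from by omega]
      exact h
    have h2 : x * a ∈ rrPow I (n + 1) := ih (n + 1) (x * a) h1
    have : a ∈ (rrPow I (n + 1)).colon (Ideal.span {x}) :=
      Ideal.mem_colon_span_singleton.mpr (by rwa [mul_comm])
    rwa [hcolon n] at this

/-- Claim A: from condition (b), `I^{j+1}~(I^t) ⊆ x^{j+1}~(I^t) + ~(I^{t+j+2})`. -/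
lemma claimA {I : Ideal R} {x : R} (hxI : x ∈ I) (t : ℕ)
    (hb : I * rrPow I t ≤ Ideal.span {x} * rrPow I t + rrPow I (t + 2)) :
    ∀ j : ℕ, I ^ (j + 1) * rrPow I t ≤
      Ideal.span {x ^ (j + 1)} * rrPow I t + rrPow I (t + j + 2) := by
  intro j
  induction j with
  | zero => simpa using hb
  | succ j ih =>
    have step1 : I ^ (j + 2) * rrPow I t ≤ I * (I ^ (j + 1) * rrPow I t) := by
      rw [show (j + 2) = (j + 1) + 1 from rfl, pow_succ, mul_comm (I ^ (j + 1)) I, mul_assoc]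
    refine le_trans step1 (le_trans (Ideal.mul_mono_right ih) ?_)
    rw [mul_add]
    apply sup_le
    · calc I * (Ideal.span {x ^ (j + 1)} * rrPow I t)
          = Ideal.span {x ^ (j + 1)} * (I * rrPow I t) := by ring
        _ ≤ Ideal.span {x ^ (j + 1)} * (Ideal.span {x} * rrPow I t + rrPow I (t + 2)) :=
            Ideal.mul_mono_right hb
        _ = Ideal.span {x ^ (j + 1 + 1)} * rrPow I t
              + Ideal.span {x ^ (j + 1)} * rrPow I (t + 2) := by
            rw [mul_add, ← mul_assoc, Ideal.span_singleton_mul_span_singleton, ← pow_succ]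
        _ ≤ Ideal.span {x ^ (j + 1 + 1)} * rrPow I t + rrPow I (t + (j + 1) + 2) := by
            apply sup_le le_sup_left
            refine le_trans ?_ le_sup_right
            have h1 : Ideal.span {x ^ (j + 1)} ≤ I ^ (j + 1) := by
              rw [Ideal.span_singleton_le_iff_mem]
              exact pow_mem_pow hxI (j + 1)
            calc Ideal.span {x ^ (j + 1)} * rrPow I (t + 2)
                ≤ I ^ (j + 1) * rrPow I (t + 2) := Ideal.mul_mono_left h1
              _ ≤ rrPow I (t + 2 + (j + 1)) := pow_mul_rrPow I (j + 1) (t + 2)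
              _ = rrPow I (t + (j + 1) + 2) := by rw [show t + 2 + (j + 1) = t + (j + 1) + 2 from by omega]
    · calc I * rrPow I (t + j + 2) ≤ rrPow I (t + j + 2 + 1) := mul_rrPow I (t + j + 2)
        _ = rrPow I (t + (j + 1) + 2) := by rw [show t + j + 2 + 1 = t + (j + 1) + 2 from by omega]
        _ ≤ _ := le_sup_right

/-- (b) implies the hard inclusion of (a). -/
lemma b_to_a {I : Ideal R} {x : R} (hxI : x ∈ I)
    (hcolon : ∀ n : ℕ, (rrPow I (n + 1)).colon (Ideal.span {x}) = rrPow I n) (t : ℕ)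
    (hb : I * rrPow I t + rrPow I (t + 2) ≤
      Ideal.span {x} * rrPow I t + rrPow I (t + 2)) :
    rrPow I (t + 1) = Ideal.span {x} * rrPow I t + rrPow I (t + 2) := by
  have hb' : I * rrPow I t ≤ Ideal.span {x} * rrPow I t + rrPow I (t + 2) :=
    le_trans le_sup_left hb
  refine le_antisymm ?_ (sup_le (span_mul_rrPow hxI t) (rrPow_anti I (by omega)))
  intro a ha
  rw [mem_rrPow] at ha
  obtain ⟨k, hk⟩ := ha
  have h1 : x ^ k * a ∈ I ^ (k + 1) * rrPow I t := by
    have h2 : a * x ^ k ∈ I ^ (t + 1 + k) := hk _ (pow_mem_pow hxI k)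
    have h3 : I ^ (t + 1 + k) ≤ I ^ (k + 1) * rrPow I t := by
      rw [show t + 1 + k = (k + 1) + t from by omega, pow_add]
      exact Ideal.mul_mono_right (pow_le_rrPow I t)
    rw [mul_comm (x ^ k) a]
    exact h3 h2
  have h4 := claimA hxI t hb' k h1
  rw [Submodule.add_eq_sup, Submodule.mem_sup] at h4
  obtain ⟨u, hu, v, hv, huv⟩ := h4
  rw [Ideal.mem_span_singleton_mul] at hu
  obtain ⟨w, hw, hwu⟩ := hu
  have hv' : v = x ^ k * (a - x * w) := by
    rw [mul_sub, ← huv, ← hwu]; ring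
  have h5 : a - x * w ∈ rrPow I (t + 2) := by
    refine colon_pow hcolon k (t + 2) (a - x * w) ?_
    rw [show t + 2 + k = t + k + 2 from by omega, ← hv']
    exact hv
  have h6 : a = x * w + (a - x * w) := by ring
  rw [h6, Submodule.add_eq_sup]
  exact Submodule.add_mem_sup
    (Ideal.mem_span_singleton_mul.mpr ⟨w, hw, rfl⟩) h5

/-- Reduction powers: `I^{S+m} = x^m I^S`. -/
lemma red_pow {I : Ideal R} {x : R} {S : ℕ} (hS : I ^ (S + 1) = Ideal.span {x} * I ^ S) :
    ∀ m : ℕ, I ^ (S + m) = Ideal.span {x ^ m} * I ^ S := by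
  intro m
  induction m with
  | zero => simp
  | succ m ih =>
    calc I ^ (S + (m + 1)) = I ^ (S + m) * I := by
          rw [show S + (m + 1) = (S + m) + 1 from rfl, pow_succ]
      _ = Ideal.span {x ^ m} * I ^ S * I := by rw [ih]
      _ = Ideal.span {x ^ m} * I ^ (S + 1) := by rw [mul_assoc, ← pow_succ]
      _ = Ideal.span {x ^ m} * (Ideal.span {x} * I ^ S) := by rw [hS]
      _ = Ideal.span {x ^ m} * Ideal.span {x} * I ^ S := (mul_assoc _ _ _).symm
      _ = Ideal.span {x ^ (m + 1)} * I ^ S := by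
          rw [Ideal.span_singleton_mul_span_singleton, ← pow_succ]

/-- `~(I^{n+S+1}) ⊆ x ~(I^n)` when `(x)` reduces `I` with reduction number `S` and `x` is
a non-zero-divisor. -/
lemma red_rr {I : Ideal R} {x : R} (hxI : x ∈ I) (hx : x ∈ nonZeroDivisors R) {S : ℕ}
    (hS : I ^ (S + 1) = Ideal.span {x} * I ^ S) (n : ℕ) :
    rrPow I (n + S + 1) ≤ Ideal.span {x} * rrPow I n := by
  intro a ha
  rw [mem_rrPow] at ha
  obtain ⟨j, hj⟩ := ha
  have h1 : a * x ^ j ∈ I ^ (n + S + 1 + j) := hj _ (pow_mem_pow hxI j)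
  have h2 : I ^ (n + S + 1 + j) = Ideal.span {x ^ (n + 1 + j)} * I ^ S := by
    rw [show n + S + 1 + j = S + (n + 1 + j) from by omega]
    exact red_pow hS (n + 1 + j)
  rw [h2, Ideal.mem_span_singleton_mul] at h1
  obtain ⟨w, hw, hwe⟩ := h1
  have h3 : (a - x ^ (n + 1) * w) * x ^ j = 0 := by
    have : x ^ (n + 1 + j) * w = x ^ (n + 1) * w * x ^ j := by ring
    rw [this] at hwe
    rw [sub_mul, hwe]; ring
  have h4 : a = x ^ (n + 1) * w := by
    have := (pow_mem hx j).2 _ h3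
    linear_combination this
  have h5 : x ^ n * w ∈ rrPow I n := by
    apply pow_le_rrPow I n
    have : x ^ n * w ∈ I ^ n * I ^ S := Ideal.mul_mem_mul (pow_mem_pow hxI n) hw
    rw [← pow_add] at this
    exact Ideal.pow_le_pow_right (by omega) this
  refine Ideal.mem_span_singleton_mul.mpr ⟨x ^ n * w, h5, ?_⟩
  rw [h4]; ring

end RRAux

/-- Let `(R,m)` be Noetherian local, `I` a regular ideal, `x ∈ I` a non-zerodivisor with
`(x)` a reduction of `I` and `~(I^{n+1}) : x = ~(I^n)` for all `n` (as for superficial `x`).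
Then for `t ≥ 0` the following are equivalent:
(a) `~(I^{t+1}) = x~(I^t) + ~(I^{t+2})`;
(b) `I~(I^t) + ~(I^{t+2}) ⊆ x~(I^t) + ~(I^{t+2})`;
(c) `~(I^{n+1}) = x~(I^n)` for all `n ≥ t`;
(d) `~(I^{t+1}) = x~(I^t)`. -/
theorem stmt_5 (R : Type*) [CommRing R] [IsNoetherianRing R] [IsLocalRing R]
    (I : Ideal R) (hreg : ∃ y ∈ I, y ∈ nonZeroDivisors R)
    (x : R) (hxI : x ∈ I) (hx : x ∈ nonZeroDivisors R)
    (hred : ∃ s : ℕ, I ^ (s + 1) = Ideal.span {x} * I ^ s)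
    (hcolon : ∀ n : ℕ, (rrPow I (n + 1)).colon (Ideal.span {x}) = rrPow I n)
    (t : ℕ) :
    List.TFAE
      [ rrPow I (t + 1) = Ideal.span {x} * rrPow I t + rrPow I (t + 2),
        I * rrPow I t + rrPow I (t + 2) ≤ Ideal.span {x} * rrPow I t + rrPow I (t + 2),
        ∀ n : ℕ, t ≤ n → rrPow I (n + 1) = Ideal.span {x} * rrPow I n,
        rrPow I (t + 1) = Ideal.span {x} * rrPow I t ] := by
  open RRAux in
  -- upgrade the reduction so that the reduction number is ≥ 1
  obtain ⟨s, hs⟩ := hred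
  have hS : I ^ ((s + 1) + 1) = Ideal.span {x} * I ^ (s + 1) := by
    rw [show (s + 1) + 1 = (s + 1) + 1 from rfl, pow_succ, mul_comm (I ^ (s+1)) I,
      show s + 1 = s + 1 from rfl]
    calc I * I ^ (s + 1) = I * (Ideal.span {x} * I ^ s) := by rw [hs]
      _ = Ideal.span {x} * (I * I ^ s) := by ring
      _ = Ideal.span {x} * I ^ (s + 1) := by rw [mul_comm I (I ^ s), ← pow_succ]
  set S := s + 1 with hSdef
  tfae_have 1 → 2
  | ha => by
    apply sup_le
    · exact le_trans (mul_rrPow I t) (le_of_eq ha)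
    · exact le_sup_right
  tfae_have 2 → 1
  | hb => b_to_a hxI hcolon t hb
  tfae_have 1 → 3
  | ha => by
    -- condition (a) propagates to all levels ≥ t
    have prop : ∀ n : ℕ, t ≤ n →
        rrPow I (n + 1) = Ideal.span {x} * rrPow I n + rrPow I (n + 2) := by
      intro n hn
      induction n, hn using Nat.le_induction with
      | base => exact ha
      | succ n hn ih =>
        apply b_to_a hxI hcolon (n + 1)
        apply sup_le _ le_sup_right
        calc I * rrPow I (n + 1)
            = I * (Ideal.span {x} * rrPow I n + rrPow I (n + 2)) := by rw [ih]
          _ = Ideal.span {x} * (I * rrPow I n) + I * rrPow I (n + 2) := by ring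
          _ ≤ Ideal.span {x} * rrPow I (n + 1) + rrPow I (n + 1 + 2) := by
              apply sup_le
              · exact le_trans (Ideal.mul_mono_right (mul_rrPow I n)) le_sup_left
              · exact le_trans (le_trans (mul_rrPow I (n + 2)) (le_of_eq (by ring_nf)))
                  le_sup_right
    intro n hn
    -- iterate (a) to get F(n+1) ≤ x F n + F(n+2+m) for all m
    have iter : ∀ m : ℕ,
        rrPow I (n + 1) ≤ Ideal.span {x} * rrPow I n + rrPow I (n + 2 + m) := by
      intro m
      induction m with
      | zero => exact le_of_eq (prop n hn)
      | succ m ih =>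
        refine le_trans ih (sup_le le_sup_left ?_)
        have h1 : rrPow I (n + 2 + m) =
            Ideal.span {x} * rrPow I (n + 1 + m) + rrPow I (n + 1 + m + 2) := by
          have := prop (n + 1 + m) (by omega)
          rw [show n + 2 + m = n + 1 + m + 1 from by omega]
          exact this
        rw [h1]
        apply sup_le
        · exact le_trans (Ideal.mul_mono_right (rrPow_anti I (by omega))) le_sup_left
        · exact le_trans (rrPow_anti I (by omega)) le_sup_right
    refine le_antisymm ?_ (span_mul_rrPow hxI n)
    refine le_trans (iter (S - 1)) (sup_le le_rfl ?_)
    have : rrPow I (n + 2 + (S - 1)) = rrPow I (n + S + 1) := by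
      congr 1; omega
    rw [this]
    exact red_rr hxI hx hS n
  tfae_have 3 → 4
  | hc => hc t le_rfl
  tfae_have 4 → 1
  | hd => by
    have h1 : rrPow I (t + 2) ≤ Ideal.span {x} * rrPow I t := by
      rw [← hd]
      exact rrPow_anti I (by omega)
    rw [Submodule.add_eq_sup, sup_eq_left.mpr h1]
    exact hd
  tfae_finish
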